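/- Let k ≥ 3 and let D be a super-orientation of the complement of C_{2k+1}, with vertices labeled x_0,…,x_{2k} so that x_i and x_j are adjacent in the underlying graph if and only if j − i ≢ ±1 (mod 2k+1). Let D' be the digraph obtained from D by deleting the vertices x_{2k−1} and x_{2k} and deleting every arc between x_0 and x_{2k−2} (so D' is a super-orientation of the complement of C_{2k−1}). If D' has a path partition orthogonal to {x_0, x_{2k−2}}, then D has a path partition orthogonal to {x_0, x_{2k}}. -/

import Mathlib

/-- A directed path in a digraph with arc relation `A`: a nonempty list of distinct
vertices each of which dominates the next. -/
def IsDipath {V : Type*} (A : V → V → Prop) (p : List V) : Prop :=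
  p ≠ [] ∧ p.Nodup ∧ p.Chain' A

/-- A path partition of the digraph `(V, A)`: a collection of vertex-disjoint directed
paths covering all of `V`. -/
def IsPathPartition {V : Type*} (A : V → V → Prop) (P : Set (List V)) : Prop :=
  (∀ p ∈ P, IsDipath A p) ∧
  (∀ p ∈ P, ∀ q ∈ P, p ≠ q → ∀ v : V, v ∈ p → v ∉ q) ∧
  (∀ v : V, ∃ p ∈ P, v ∈ p)

/-- A path partition `P` and a stable set `S` are orthogonal if every path of `P`
contains exactly one vertex of `S`. -/
def OrthogonalPP {V : Type*} (P : Set (List V)) (S : Set V) : Prop :=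
  ∀ p ∈ P, ∃! v : V, v ∈ S ∧ v ∈ p

/-- A directed path of the subdigraph induced by the vertex set `W`. -/
def IsDipathOn {V : Type*} (A : V → V → Prop) (W : Set V) (p : List V) : Prop :=
  p ≠ [] ∧ p.Nodup ∧ (∀ v ∈ p, v ∈ W) ∧ p.Chain' A

/-- A path partition of the subdigraph induced by the vertex set `W`. -/
def IsPathPartitionOn {V : Type*} (A : V → V → Prop) (W : Set V) (P : Set (List V)) : Prop :=
  (∀ p ∈ P, IsDipathOn A W p) ∧
  (∀ p ∈ P, ∀ q ∈ P, p ≠ q → ∀ v : V, v ∈ p → v ∉ q) ∧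
  (∀ v ∈ W, ∃ p ∈ P, v ∈ p)

/-- A stable set: a set of pairwise non-adjacent vertices. -/
def IsStableSet {V : Type*} (A : V → V → Prop) (S : Set V) : Prop :=
  ∀ u ∈ S, ∀ v ∈ S, u ≠ v → ¬ A u v ∧ ¬ A v u

/-- A digraph is α-diperfect if for every induced subdigraph (on a vertex set `W`) and
every maximum stable set `S` of it, there is a path partition of it orthogonal to `S`. -/
def AlphaDiperfect {V : Type*} (A : V → V → Prop) : Prop :=
  ∀ (W S : Set V), S ⊆ W → IsStableSet A S →
    (∀ T ⊆ W, IsStableSet A T → T.ncard ≤ S.ncard) →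
    ∃ P : Set (List V), IsPathPartitionOn A W P ∧ OrthogonalPP P S

/-- let `D` be a super-orientation of `(C_{2k+1})ᶜ`, `k ≥ 3`, and let `D'`
be obtained from `D` by deleting `x_{2k-1}`, `x_{2k}` and every arc between `x_0` and
`x_{2k-2}`. If `D'` has a path partition orthogonal to `{x_0, x_{2k-2}}`, then `D` has a
path partition orthogonal to `{x_0, x_{2k}}`. -/

private lemma castInj {n a b : ℕ} (ha : a < n) (hb : b < n)
    (h : (a : ZMod n) = b) : a = b := by
  have h2 := congrArg ZMod.val h
  rwa [ZMod.val_cast_of_lt ha, ZMod.val_cast_of_lt hb] at h2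

private lemma insert_vertex_aux {V : Type*} (A : V → V → Prop) (w : V) :
    ∀ (p : List V), p ≠ [] → p.Chain' A → (∀ v ∈ p, A v w ∨ A w v) →
    ∃ q : List V, List.Perm q (w :: p) ∧ q.Chain' A ∧
      (q.head? = p.head? ∨ q = w :: p) := by
  intro p
  induction p with
  | nil => simp
  | cons a rest ih =>
    intro _ hchain hadj
    rcases hadj a (by simp) with hA | hA
    · -- A a w
      cases rest with
      | nil =>
        exact ⟨[a, w], List.Perm.swap _ _ _, List.isChain_pair.mpr hA, Or.inl rfl⟩
      | cons b t =>
        obtain ⟨q', hperm, hchain', hhead⟩ := ih (by simp) hchain.tail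
          (fun v hv => hadj v (List.mem_cons_of_mem _ hv))
        refine ⟨a :: q', (hperm.cons a).trans (List.Perm.swap _ _ _), ?_, Or.inl rfl⟩
        refine List.isChain_cons.mpr ?_
        refine ⟨?_, hchain'⟩
        intro y hy
        rcases hhead with h1 | h1
        · rw [h1] at hy
          simp only [List.head?_cons, Option.mem_def, Option.some.injEq] at hy
          subst hy
          exact (List.isChain_cons_cons.mp hchain).1
        · subst h1
          simp only [List.head?_cons, Option.mem_def, Option.some.injEq] at hy
          subst hy
          exact hA
    · exact ⟨w :: a :: rest, List.Perm.refl _, List.isChain_cons_cons.mpr ⟨hA, hchain⟩, Or.inr rfl⟩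

private lemma insert_vertex {V : Type*} (A : V → V → Prop) (w : V)
    (p : List V) (hne : p ≠ []) (hchain : p.Chain' A)
    (hadj : ∀ v ∈ p, A v w ∨ A w v) :
    ∃ q : List V, List.Perm q (w :: p) ∧ q.Chain' A := by
  obtain ⟨q, h1, h2, _⟩ := insert_vertex_aux A w p hne hchain hadj
  exact ⟨q, h1, h2⟩

theorem stmt_3 (k : ℕ) (hk : 3 ≤ k)
    (A : ZMod (2*k+1) → ZMod (2*k+1) → Prop)
    (hso : ∀ u v : ZMod (2*k+1),
      (A u v ∨ A v u) ↔ (u ≠ v ∧ v - u ≠ 1 ∧ u - v ≠ 1))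
    (h : ∃ P : Set (List (ZMod (2*k+1))),
      IsPathPartitionOn
        (fun u v => A u v ∧
          ¬((u = ((0 : ℕ) : ZMod (2*k+1)) ∧ v = ((2*k-2 : ℕ) : ZMod (2*k+1))) ∨
            (u = ((2*k-2 : ℕ) : ZMod (2*k+1)) ∧ v = ((0 : ℕ) : ZMod (2*k+1)))))
        {w : ZMod (2*k+1) | w ≠ ((2*k-1 : ℕ) : ZMod (2*k+1)) ∧ w ≠ ((2*k : ℕ) : ZMod (2*k+1))}
        P ∧
      OrthogonalPP P {((0 : ℕ) : ZMod (2*k+1)), ((2*k-2 : ℕ) : ZMod (2*k+1))}) :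
    ∃ P : Set (List (ZMod (2*k+1))), IsPathPartition A P ∧
      OrthogonalPP P {((0 : ℕ) : ZMod (2*k+1)), ((2*k : ℕ) : ZMod (2*k+1))} := by
  obtain ⟨P', ⟨hpaths, hdisj, hcover⟩, horth⟩ := h
  set x0 : ZMod (2*k+1) := ((0 : ℕ) : ZMod (2*k+1)) with hx0def
  set a : ZMod (2*k+1) := ((2*k-2 : ℕ) : ZMod (2*k+1)) with hadef
  set b : ZMod (2*k+1) := ((2*k-1 : ℕ) : ZMod (2*k+1)) with hbdef
  set c : ZMod (2*k+1) := ((2*k : ℕ) : ZMod (2*k+1)) with hcdef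
  have hne : ∀ {i j : ℕ}, i < 2*k+1 → j < 2*k+1 → i ≠ j →
      ((i : ZMod (2*k+1)) ≠ (j : ZMod (2*k+1))) := by
    intro i j hi hj hij heq
    exact hij (castInj hi hj heq)
  have h0a : x0 ≠ a := hne (by omega) (by omega) (by omega)
  have h0b : x0 ≠ b := hne (by omega) (by omega) (by omega)
  have h0c : x0 ≠ c := hne (by omega) (by omega) (by omega)
  have hab : a ≠ b := hne (by omega) (by omega) (by omega)
  have hac : a ≠ c := hne (by omega) (by omega) (by omega)
  have hbc : b ≠ c := hne (by omega) (by omega) (by omega)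
  have eab : b = a + 1 := by
    rw [hadef, hbdef]
    calc ((2*k-1 : ℕ) : ZMod (2*k+1))
        = (((2*k-2)+1 : ℕ) : ZMod (2*k+1)) := congrArg _ (by omega)
      _ = ((2*k-2 : ℕ) : ZMod (2*k+1)) + 1 := by rw [Nat.cast_add, Nat.cast_one]
  have ebc : c = b + 1 := by
    rw [hbdef, hcdef]
    calc ((2*k : ℕ) : ZMod (2*k+1))
        = (((2*k-1)+1 : ℕ) : ZMod (2*k+1)) := congrArg _ (by omega)
      _ = ((2*k-1 : ℕ) : ZMod (2*k+1)) + 1 := by rw [Nat.cast_add, Nat.cast_one]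
  have ec0 : c + 1 = x0 := by
    rw [hcdef, hx0def, Nat.cast_zero]
    calc ((2*k : ℕ) : ZMod (2*k+1)) + 1
        = ((2*k+1 : ℕ) : ZMod (2*k+1)) := by rw [Nat.cast_add, Nat.cast_one]
      _ = 0 := ZMod.natCast_self (2*k+1)
  have hx0W : x0 ∈ {w : ZMod (2*k+1) | w ≠ b ∧ w ≠ c} := ⟨h0b, h0c⟩
  have haW : a ∈ {w : ZMod (2*k+1) | w ≠ b ∧ w ≠ c} := ⟨hab, hac⟩
  obtain ⟨p, hp, hx0p⟩ := hcover x0 hx0W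
  obtain ⟨q, hq, haq⟩ := hcover a haW
  have hpq : p ≠ q := by
    intro hEq
    subst hEq
    obtain ⟨v, _, huniq⟩ := horth p hp
    have h1 := huniq x0 ⟨Set.mem_insert _ _, hx0p⟩
    have h2 := huniq a ⟨Set.mem_insert_of_mem _ rfl, haq⟩
    exact h0a (h1.trans h2.symm)
  have hanp : a ∉ p := fun ha' => hdisj p hp q hq hpq a ha' haq
  have hx0nq : x0 ∉ q := fun h0' => hdisj q hq p hp hpq.symm x0 h0' hx0p
  have hPpq : ∀ r ∈ P', r = p ∨ r = q := by
    intro r hr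
    obtain ⟨v, ⟨hvS, hvr⟩, _⟩ := horth r hr
    rcases hvS with h1 | h1
    · left
      by_contra hne'
      exact hdisj p hp r hr (fun h' => hne' h'.symm) x0 hx0p (h1 ▸ hvr)
    · right
      by_contra hne'
      exact hdisj q hq r hr (fun h' => hne' h'.symm) a haq
        ((Set.mem_singleton_iff.mp h1) ▸ hvr)
  obtain ⟨hpne, hpnd, hpW, hpchain'⟩ := hpaths p hp
  obtain ⟨hqne, hqnd, hqW, hqchain'⟩ := hpaths q hq
  have hpchain : p.Chain' A := hpchain'.imp (fun u v h => h.1)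
  have hqchain : q.Chain' A := hqchain'.imp (fun u v h => h.1)
  have hadjp : ∀ v ∈ p, A v b ∨ A b v := by
    intro v hv
    obtain ⟨hvb, hvc⟩ := hpW v hv
    refine (hso v b).mpr ⟨hvb, ?_, ?_⟩
    · intro h1
      have h2 : b = v + 1 := sub_eq_iff_eq_add'.mp h1
      have h3 : v + 1 = a + 1 := by rw [← h2, eab]
      have hv' : v = a := add_right_cancel h3
      exact hanp (hv' ▸ hv)
    · intro h1
      have h2 : v = b + 1 := sub_eq_iff_eq_add'.mp h1
      exact hvc (by rw [h2, ← ebc])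
  have hadjq : ∀ v ∈ q, A v c ∨ A c v := by
    intro v hv
    obtain ⟨hvb, hvc⟩ := hqW v hv
    refine (hso v c).mpr ⟨hvc, ?_, ?_⟩
    · intro h1
      have h2 : c = v + 1 := sub_eq_iff_eq_add'.mp h1
      have h3 : v + 1 = b + 1 := by rw [← h2, ebc]
      have hv' : v = b := add_right_cancel h3
      exact hvb hv'
    · intro h1
      have h2 : v = c + 1 := sub_eq_iff_eq_add'.mp h1
      have hv' : v = x0 := by rw [h2, ec0]
      exact hx0nq (hv' ▸ hv)
  obtain ⟨p', hpp', hp'chain⟩ := insert_vertex A b p hpne hpchain hadjp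
  obtain ⟨q', hqq', hq'chain⟩ := insert_vertex A c q hqne hqchain hadjq
  have memp' : ∀ v, v ∈ p' ↔ v = b ∨ v ∈ p := by
    intro v; rw [hpp'.mem_iff, List.mem_cons]
  have memq' : ∀ v, v ∈ q' ↔ v = c ∨ v ∈ q := by
    intro v; rw [hqq'.mem_iff, List.mem_cons]
  have hbnp : b ∉ p := fun hb' => (hpW b hb').1 rfl
  have hcnq : c ∉ q := fun hc' => (hqW c hc').2 rfl
  have hcnp : c ∉ p := fun hc' => (hpW c hc').2 rfl
  have hbnq : b ∉ q := fun hb' => (hqW b hb').1 rfl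
  have hx0p' : x0 ∈ p' := (memp' x0).mpr (Or.inr hx0p)
  have hcq' : c ∈ q' := (memq' c).mpr (Or.inl rfl)
  have hx0nq' : x0 ∉ q' := by
    rw [memq']
    rintro (h1 | h1)
    · exact h0c h1
    · exact hx0nq h1
  have hcnp' : c ∉ p' := by
    rw [memp']
    rintro (h1 | h1)
    · exact hbc h1.symm
    · exact hcnp h1
  have hp'ne : p' ≠ [] := by
    intro h'
    have h2 := hpp'.length_eq
    rw [h'] at h2
    simp at h2
  have hq'ne : q' ≠ [] := by
    intro h'
    have h2 := hqq'.length_eq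
    rw [h'] at h2
    simp at h2
  refine ⟨{p', q'}, ⟨?_, ?_, ?_⟩, ?_⟩
  · rintro r (rfl | rfl)
    · exact ⟨hp'ne, hpp'.nodup_iff.mpr (List.nodup_cons.mpr ⟨hbnp, hpnd⟩), hp'chain⟩
    · exact ⟨hq'ne, hqq'.nodup_iff.mpr (List.nodup_cons.mpr ⟨hcnq, hqnd⟩), hq'chain⟩
  · rintro r (rfl | rfl) s (rfl | rfl) hrs v hv
    · exact absurd rfl hrs
    · rw [memp'] at hv
      rw [memq']
      rcases hv with rfl | hv
      · rintro (h1 | h1)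
        · exact hbc h1
        · exact hbnq h1
      · rintro (rfl | h1)
        · exact hcnp hv
        · exact hdisj p hp q hq hpq v hv h1
    · rw [memq'] at hv
      rw [memp']
      rcases hv with rfl | hv
      · rintro (h1 | h1)
        · exact hbc h1.symm
        · exact hcnp h1
      · rintro (rfl | h1)
        · exact hbnq hv
        · exact hdisj q hq p hp hpq.symm v hv h1
    · exact absurd rfl hrs
  · intro v
    by_cases hvb : v = b
    · exact ⟨p', Or.inl rfl, (memp' v).mpr (Or.inl hvb)⟩
    by_cases hvc : v = c
    · exact ⟨q', Or.inr rfl, (memq' v).mpr (Or.inl hvc)⟩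
    obtain ⟨r, hr, hvr⟩ := hcover v ⟨hvb, hvc⟩
    rcases hPpq r hr with rfl | rfl
    · exact ⟨p', Or.inl rfl, (memp' v).mpr (Or.inr hvr)⟩
    · exact ⟨q', Or.inr rfl, (memq' v).mpr (Or.inr hvr)⟩
  · rintro r (rfl | rfl)
    · refine ⟨x0, ⟨Set.mem_insert _ _, hx0p'⟩, ?_⟩
      rintro v ⟨(rfl | hvS), hvr⟩
      · rfl
      · exact absurd ((Set.mem_singleton_iff.mp hvS) ▸ hvr) hcnp'
    · refine ⟨c, ⟨Set.mem_insert_of_mem _ rfl, hcq'⟩, ?_⟩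
      rintro v ⟨(rfl | hvS), hvr⟩
      · exact absurd hvr hx0nq'
      · exact Set.mem_singleton_iff.mp hvS
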